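/- In any mobi algebra, $\text{½}\cdot p(a,b,c)=(\overline{b}\cdot a)\oplus(b\cdot c)$, where $\overline{x}=p(1,x,0)$, $x\cdot y=p(0,x,y)$, and $x\oplus y=p(x,\text{½},y)$. -/
import Mathlib


structure MobiAlgebra (A : Type*) where
  p : A → A → A → A
  zero : A
  half : A
  one : A
  A1 : p one half zero = half
  A2 : ∀ a, p zero a one = a
  A3 : ∀ a b, p a b a = a
  A4 : ∀ a b, p a zero b = a
  A5 : ∀ a b, p a one b = b
  A6 : ∀ a b₁ b₂, p a half b₁ = p a half b₂ → b₁ = b₂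
  A7 : ∀ a b c₁ c₂ c₃, p a (p c₁ c₂ c₃) b = p (p a c₁ b) c₂ (p a c₃ b)
  A8 : ∀ a₁ a₂ b₁ b₂ c,
    p (p a₁ c b₁) half (p a₂ c b₂) = p (p a₁ half a₂) c (p b₁ half b₂)

structure MobiSpace {A : Type*} (M : MobiAlgebra A) (X : Type*) where
  q : X → A → X → X
  X1 : ∀ x y, q x M.zero y = x
  X2 : ∀ x y, q x M.one y = y
  X3 : ∀ x a, q x a x = x
  X4 : ∀ x y₁ y₂, q x M.half y₁ = q x M.half y₂ → y₁ = y₂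
  X5 : ∀ x y a b c, q (q x a y) b (q x c y) = q x (M.p a b c) y

theorem half_mul_p {A : Type*} (M : MobiAlgebra A) (a b c : A) :
    M.p M.zero M.half (M.p a b c)
      = M.p (M.p M.zero (M.p M.one b M.zero) a) M.half (M.p M.zero b c) := by
  have comm : ∀ x y, M.p x M.half y = M.p y M.half x := by
    intro x y
    conv_lhs => rw [← M.A1]
    rw [M.A7, M.A5, M.A4]
  calc M.p M.zero M.half (M.p a b c)
      = M.p (M.p M.zero b M.zero) M.half (M.p a b c) := by rw [M.A3]
    _ = M.p (M.p M.zero M.half a) b (M.p M.zero M.half c) := M.A8 _ _ _ _ _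
    _ = M.p (M.p a M.half M.zero) b (M.p M.zero M.half c) := by rw [comm]
    _ = M.p (M.p a b M.zero) M.half (M.p M.zero b c) := (M.A8 _ _ _ _ _).symm
    _ = M.p (M.p (M.p M.zero M.one a) b (M.p M.zero M.zero a)) M.half (M.p M.zero b c) := by
        rw [M.A5, M.A4]
    _ = M.p (M.p M.zero (M.p M.one b M.zero) a) M.half (M.p M.zero b c) := by rw [← M.A7]
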